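/- Let G be a topological group and X a G-space admitting local cross-sections at every point. Then any continuous G-equivariant map π : Y → X from a G-space Y to X is a locally trivial fibration: each point x₀ ∈ X has a neighborhood U and a homeomorphism U × π⁻¹(x₀) → π⁻¹(U) given by (u, z) ↦ χ(u)·z, where χ is a local cross-section at x₀ with χ(x₀) = 1. -/

import Mathlib

/-- Palais' Proposition (theorem A): if a `G`-space `X` admits local cross-sections at every
point, then any continuous `G`-equivariant map `π : Y → X` is locally trivial: each `x₀ ∈ X`
has a neighborhood `U` and a cross-section `χ` at `x₀` with `χ x₀ = 1` such that
`(u, z) ↦ χ u • z` is a homeomorphism `U × π⁻¹(x₀) ≃ π⁻¹(U)` commuting with the projection. -/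
theorem statement2 {G X Y : Type*} [Group G] [TopologicalSpace G] [IsTopologicalGroup G]
    [TopologicalSpace X] [MulAction G X] [ContinuousSMul G X]
    [TopologicalSpace Y] [MulAction G Y] [ContinuousSMul G Y]
    (hsec : ∀ x₀ : X, ∃ U ∈ nhds x₀, ∃ χ : X → G,
      ContinuousOn χ U ∧ ∀ u ∈ U, χ u • x₀ = u)
    (π : Y → X) (hπcont : Continuous π) (hπequiv : ∀ (g : G) (y : Y), π (g • y) = g • π y) :
    ∀ x₀ : X, ∃ U ∈ nhds x₀, ∃ χ : X → G,
      ContinuousOn χ U ∧ χ x₀ = 1 ∧ (∀ u ∈ U, χ u • x₀ = u) ∧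
      ∃ e : (U × (π ⁻¹' {x₀})) ≃ₜ (π ⁻¹' U),
        ∀ p : U × (π ⁻¹' {x₀}),
          ((e p : Y) = χ (p.1 : X) • (p.2 : Y)) ∧ π (e p : Y) = (p.1 : X) := by
  intro x₀
  obtain ⟨U, hU, χ₀, hχ₀c, hχ₀⟩ := hsec x₀
  have hx₀U : x₀ ∈ U := mem_of_mem_nhds hU
  set χ : X → G := fun u => χ₀ u * (χ₀ x₀)⁻¹ with hχdef
  have hχc : ContinuousOn χ U := hχ₀c.mul continuousOn_const
  have hfix : (χ₀ x₀)⁻¹ • x₀ = x₀ := inv_smul_eq_iff.2 (hχ₀ x₀ hx₀U).symm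
  have hχ1 : χ x₀ = 1 := mul_inv_cancel _
  have hχ : ∀ u ∈ U, χ u • x₀ = u := by
    intro u hu
    simp only [hχdef, mul_smul, hfix]
    exact hχ₀ u hu
  refine ⟨U, hU, χ, hχc, hχ1, hχ, ?_⟩
  -- forward map
  have hmemf : ∀ p : U × (π ⁻¹' {x₀}), χ (p.1 : X) • (p.2 : Y) ∈ π ⁻¹' U := by
    intro p
    have h2 : π (p.2 : Y) = x₀ := p.2.2
    simp only [Set.mem_preimage, hπequiv, h2, hχ _ p.1.2]
    exact p.1.2
  have hmemg : ∀ y : π ⁻¹' U, (χ (π (y : Y)))⁻¹ • (y : Y) ∈ π ⁻¹' {x₀} := by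
    intro y
    have : π (y : Y) ∈ U := y.2
    simp only [Set.mem_preimage, Set.mem_singleton_iff, hπequiv]
    rw [inv_smul_eq_iff, hχ _ this]
  have hχU : Continuous (U.restrict χ) := continuousOn_iff_continuous_restrict.mp hχc
  refine ⟨Homeomorph.mk
    { toFun := fun p => ⟨χ (p.1 : X) • (p.2 : Y), hmemf p⟩
      invFun := fun y => (⟨π (y : Y), y.2⟩, ⟨(χ (π (y : Y)))⁻¹ • (y : Y), hmemg y⟩)
      left_inv := ?_
      right_inv := ?_ } ?_ ?_, fun p => ⟨rfl, ?_⟩⟩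
  · rintro ⟨⟨u, hu⟩, ⟨z, hz⟩⟩
    have hz' : π z = x₀ := hz
    have hπf : π (χ u • z) = u := by rw [hπequiv, hz', hχ u hu]
    ext
    · exact hπf
    · simp only [hπf, inv_smul_smul]
  · rintro ⟨y, hy⟩
    ext
    simp only [smul_inv_smul]
  · -- continuity of forward map
    apply Continuous.subtype_mk
    exact (hχU.comp continuous_fst).smul (continuous_subtype_val.comp continuous_snd)
  · -- continuity of inverse map
    have hres : Continuous fun y : π ⁻¹' U => (⟨π (y : Y), y.2⟩ : U) :=
      Continuous.subtype_mk (hπcont.comp continuous_subtype_val) _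
    apply Continuous.prodMk hres
    apply Continuous.subtype_mk
    exact ((hχU.comp hres).inv).smul continuous_subtype_val
  · -- π (e p) = p.1
    rcases p with ⟨⟨u, hu⟩, ⟨z, hz⟩⟩
    have hz' : π z = x₀ := hz
    show π (χ u • z) = u
    rw [hπequiv, hz', hχ u hu]
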